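/- If θ : [N] → Z is an order-reversing injection and θ_U : U → U is the algebra homomorphism sending u_i to u_{θ(i)} (with u_j := 0 for j ∉ [N]), then θ_U(I_RKst) ⊆ I_RKst. -/

import Mathlib

open scoped Classical

noncomputable section

/-- The monomial (word) in the free associative algebra `U = ℤ⟨u_1, …, u_N⟩`,
whose variables are indexed by `Fin N` (index `i` corresponds to the letter `i+1 ∈ [N]`). -/
def word (N : ℕ) (l : List (Fin N)) : FreeAlgebra ℤ (Fin N) :=
  (l.map (FreeAlgebra.ι ℤ)).prod

/-- The generating relations of the two-sided ideal `I_RKst`. -/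
inductive RKRel (N : ℕ) : FreeAlgebra ℤ (Fin N) → FreeAlgebra ℤ (Fin N) → Prop
  | knuth_rotation (a b c : Fin N) (hab : a < b) (hbc : b < c) :
      RKRel N
        (FreeAlgebra.ι ℤ b *
            (FreeAlgebra.ι ℤ a * FreeAlgebra.ι ℤ c - FreeAlgebra.ι ℤ c * FreeAlgebra.ι ℤ a) -
          (FreeAlgebra.ι ℤ a * FreeAlgebra.ι ℤ c - FreeAlgebra.ι ℤ c * FreeAlgebra.ι ℤ a) *
            FreeAlgebra.ι ℤ b)
        0
  | repeated (l : List (Fin N)) (h : ¬ l.Nodup) : RKRel N (word N l) 0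

/-- The two-sided ideal `I_RKst`, realized as the congruence class of `0` under the ring
congruence generated by the relations `RKRel N`. -/
def IRKst (N : ℕ) : Set (FreeAlgebra ℤ (Fin N)) :=
  {z | ringConGen (RKRel N) z 0}

/-- The algebra endomorphism `θ_U : U → U` induced by a map `θ : [N] → ℤ` on letters,
sending `u_i ↦ u_{θ(i)}`, where `u_j := 0` for `j ∉ [N]`.  Here the variable indexed by
`i : Fin N` is the letter `i+1 ∈ [N] = {1, …, N}`. -/
def thetaU (N : ℕ) (θ : Fin N → ℤ) : FreeAlgebra ℤ (Fin N) →ₐ[ℤ] FreeAlgebra ℤ (Fin N) :=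
  FreeAlgebra.lift ℤ (fun i =>
    if h : 1 ≤ θ i ∧ θ i ≤ (N : ℤ) then
      FreeAlgebra.ι ℤ (⟨(θ i - 1).toNat, by omega⟩ : Fin N)
    else 0)

/-- The total letter map: `i ↦ θ(i) - 1` as a `Fin N` index when in range, else `i` (junk). -/
def gmap (N : ℕ) (θ : Fin N → ℤ) : Fin N → Fin N := fun i =>
  if h : 1 ≤ θ i ∧ θ i ≤ (N : ℤ) then ⟨(θ i - 1).toNat, by omega⟩ else i

lemma thetaU_ι (N : ℕ) (θ : Fin N → ℤ) (i : Fin N) :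
    thetaU N θ (FreeAlgebra.ι ℤ i) =
      if 1 ≤ θ i ∧ θ i ≤ (N : ℤ) then FreeAlgebra.ι ℤ (gmap N θ i) else 0 := by
  rw [thetaU, FreeAlgebra.lift_ι_apply, gmap]
  by_cases h : 1 ≤ θ i ∧ θ i ≤ (N : ℤ) <;> simp [h]

lemma thetaU_word (N : ℕ) (θ : Fin N → ℤ) (l : List (Fin N)) :
    thetaU N θ (word N l) =
      if ∀ i ∈ l, 1 ≤ θ i ∧ θ i ≤ (N : ℤ) then word N (l.map (gmap N θ)) else 0 := by
  induction l with
  | nil => simp [word]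
  | cons a l ih =>
    have : word N (a :: l) = FreeAlgebra.ι ℤ a * word N l := by simp [word]
    rw [this, map_mul, ih, thetaU_ι]
    by_cases ha : 1 ≤ θ a ∧ θ a ≤ (N : ℤ)
    · by_cases hl : ∀ i ∈ l, 1 ≤ θ i ∧ θ i ≤ (N : ℤ)
      · have hall : ∀ i ∈ a :: l, 1 ≤ θ i ∧ θ i ≤ (N : ℤ) := by
          intro i hi
          rcases List.mem_cons.mp hi with h | h
          · exact h ▸ ha
          · exact hl i h
        simp only [if_pos ha, if_pos hl, if_pos hall]
        simp [word]
      · have : ¬ ∀ i ∈ a :: l, 1 ≤ θ i ∧ θ i ≤ (N : ℤ) := fun h =>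
          hl fun i hi => h i (List.mem_cons_of_mem a hi)
        simp [ha, hl, this]
    · have : ¬ ∀ i ∈ a :: l, 1 ≤ θ i ∧ θ i ≤ (N : ℤ) := fun h =>
        ha (h a List.mem_cons_self)
      simp [ha, this]

/-- If `θ : [N] → ℤ` is an order-reversing injection (equivalently, strictly antitone),
then `θ_U(I_RKst) ⊆ I_RKst`. -/
theorem thetaU_preserves_IRKst_of_strictAnti (N : ℕ) (θ : Fin N → ℤ) (hθ : StrictAnti θ) :
    ∀ z ∈ IRKst N, thetaU N θ z ∈ IRKst N := by
  have key : ∀ x y : FreeAlgebra ℤ (Fin N), RingConGen.Rel (RKRel N) x y →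
      RingConGen.Rel (RKRel N) (thetaU N θ x) (thetaU N θ y) := by
    intro x y h
    induction h with
    | of x y hxy =>
      rw [show thetaU N θ y = 0 by cases hxy <;> simp]
      cases hxy with
      | knuth_rotation a b c hab hbc =>
        simp only [map_sub, map_mul, thetaU_ι]
        by_cases hbg : 1 ≤ θ b ∧ θ b ≤ (N : ℤ)
        · by_cases hag : 1 ≤ θ a ∧ θ a ≤ (N : ℤ)
          · by_cases hcg : 1 ≤ θ c ∧ θ c ≤ (N : ℤ)
            · simp only [if_pos hbg, if_pos hag, if_pos hcg]
              have h1 : θ b < θ a := hθ hab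
              have h2 : θ c < θ b := hθ hbc
              have hc'b' : gmap N θ c < gmap N θ b := by
                simp only [gmap, dif_pos hbg, dif_pos hcg, Fin.lt_def]
                omega
              have hb'a' : gmap N θ b < gmap N θ a := by
                simp only [gmap, dif_pos hbg, dif_pos hag, Fin.lt_def]
                omega
              have hrel := RingConGen.Rel.of _ _
                (RKRel.knuth_rotation (gmap N θ c) (gmap N θ b) (gmap N θ a) hc'b' hb'a')
              have hneg : RingConGen.Rel (RKRel N) _ _ :=
                (ringConGen (RKRel N)).neg hrel
              rw [neg_zero] at hneg
              have heq :
                  -(FreeAlgebra.ι ℤ (gmap N θ b) *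
                      (FreeAlgebra.ι ℤ (gmap N θ c) * FreeAlgebra.ι ℤ (gmap N θ a) -
                        FreeAlgebra.ι ℤ (gmap N θ a) * FreeAlgebra.ι ℤ (gmap N θ c)) -
                    (FreeAlgebra.ι ℤ (gmap N θ c) * FreeAlgebra.ι ℤ (gmap N θ a) -
                        FreeAlgebra.ι ℤ (gmap N θ a) * FreeAlgebra.ι ℤ (gmap N θ c)) *
                      FreeAlgebra.ι ℤ (gmap N θ b)) =
                  FreeAlgebra.ι ℤ (gmap N θ b) *
                      (FreeAlgebra.ι ℤ (gmap N θ a) * FreeAlgebra.ι ℤ (gmap N θ c) -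
                        FreeAlgebra.ι ℤ (gmap N θ c) * FreeAlgebra.ι ℤ (gmap N θ a)) -
                    (FreeAlgebra.ι ℤ (gmap N θ a) * FreeAlgebra.ι ℤ (gmap N θ c) -
                        FreeAlgebra.ι ℤ (gmap N θ c) * FreeAlgebra.ι ℤ (gmap N θ a)) *
                      FreeAlgebra.ι ℤ (gmap N θ b) := by noncomm_ring
              rw [heq] at hneg
              exact hneg
            · simpa [if_neg hcg] using RingConGen.Rel.refl (0 : FreeAlgebra ℤ (Fin N))
          · simpa [if_neg hag] using RingConGen.Rel.refl (0 : FreeAlgebra ℤ (Fin N))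
        · simpa [if_neg hbg] using RingConGen.Rel.refl (0 : FreeAlgebra ℤ (Fin N))
      | repeated l hl =>
        rw [thetaU_word]
        by_cases hall : ∀ i ∈ l, 1 ≤ θ i ∧ θ i ≤ (N : ℤ)
        · rw [if_pos hall]
          have hdup : ¬ (l.map (gmap N θ)).Nodup := fun h => hl (List.Nodup.of_map _ h)
          exact RingConGen.Rel.of _ _ (RKRel.repeated _ hdup)
        · rw [if_neg hall]
          exact RingConGen.Rel.refl 0
    | refl x => exact RingConGen.Rel.refl _
    | symm _ ih => exact RingConGen.Rel.symm ih
    | trans _ _ ih1 ih2 => exact RingConGen.Rel.trans ih1 ih2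
    | add _ _ ih1 ih2 => simpa [map_add] using RingConGen.Rel.add ih1 ih2
    | mul _ _ ih1 ih2 => simpa [map_mul] using RingConGen.Rel.mul ih1 ih2
  intro z hz
  have h0 := key z 0 hz
  simp only [map_zero] at h0
  exact h0

end
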